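/- For the metric function f(r) = r²/L² − 8πM*/r + 4πQ*²/r², the black hole is extremal (f has a double root at some r_h > 0) if and only if Q*⁶ = (27/4)π M*⁴ L². -/

import Mathlib

open Real

lemma hasDerivAt_metric (L Ms Qs r : ℝ) (hr : r ≠ 0) :
    HasDerivAt (fun r : ℝ => r^2/L^2 - 8*π*Ms/r + 4*π*Qs^2/r^2)
      (2*r/L^2 + 8*π*Ms/r^2 - 8*π*Qs^2/r^3) r := by
  have hpow : HasDerivAt (fun r : ℝ => r^2) (2*r) r := by
    simpa using hasDerivAt_pow 2 r
  have h1 : HasDerivAt (fun r : ℝ => r^2/L^2) (2*r/L^2) r := hpow.div_const _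
  have hinv : HasDerivAt (fun r : ℝ => r⁻¹) (-(r^2)⁻¹) r := by
    simpa using hasDerivAt_inv hr
  have h2 : HasDerivAt (fun r : ℝ => 8*π*Ms * r⁻¹) (8*π*Ms * -(r^2)⁻¹) r :=
    hinv.const_mul _
  have hinv2 : HasDerivAt (fun r : ℝ => (r^2)⁻¹) (-(2*r) / (r^2)^2) r :=
    hpow.inv (pow_ne_zero 2 hr)
  have h3 : HasDerivAt (fun r : ℝ => 4*π*Qs^2 * (r^2)⁻¹)
      (4*π*Qs^2 * (-(2*r) / (r^2)^2)) r := hinv2.const_mul _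
  have h : HasDerivAt (fun r : ℝ => r^2/L^2 - 8*π*Ms * r⁻¹ + 4*π*Qs^2 * (r^2)⁻¹) _ r := (h1.sub h2).add h3
  have hfun : (fun r : ℝ => r^2/L^2 - 8*π*Ms * r⁻¹ + 4*π*Qs^2 * (r^2)⁻¹)
      = (fun r : ℝ => r^2/L^2 - 8*π*Ms/r + 4*π*Qs^2/r^2) := by
    funext x; rw [div_eq_mul_inv (8*π*Ms), div_eq_mul_inv (4*π*Qs^2)]
  rw [hfun] at h
  convert h using 1
  field_simp
  ring

/-- Extremality (double root of the metric function f) iff Q*⁶ = (27/4)π M*⁴ L². -/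
theorem stmt0 (L Ms Qs : ℝ) (hL : 0 < L) (hM : 0 < Ms) (hQ : 0 < Qs) :
    (∃ rh : ℝ, 0 < rh ∧
      (rh^2/L^2 - 8*π*Ms/rh + 4*π*Qs^2/rh^2 = 0) ∧
      deriv (fun r : ℝ => r^2/L^2 - 8*π*Ms/r + 4*π*Qs^2/r^2) rh = 0) ↔
    Qs^6 = (27/4)*π*Ms^4*L^2 := by
  have hπ : (0:ℝ) < π := Real.pi_pos
  constructor
  · rintro ⟨rh, hrh, h1, h2⟩
    have hrne : rh ≠ 0 := ne_of_gt hrh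
    have hLne : L ≠ 0 := ne_of_gt hL
    rw [(hasDerivAt_metric L Ms Qs rh hrne).deriv] at h2
    -- clear denominators
    have e1 : rh^4 - 8*π*Ms*L^2*rh + 4*π*Qs^2*L^2 = 0 := by
      have h := h1
      field_simp at h
      apply mul_right_cancel₀ hrne
      linear_combination rh * h
    have e2 : 2*rh^4 + 8*π*Ms*L^2*rh - 8*π*Qs^2*L^2 = 0 := by
      have h := h2
      field_simp at h
      apply mul_right_cancel₀ (pow_ne_zero 2 hrne)
      linear_combination rh^2 * h
    have h3 : rh^3 = 2*π*Ms*L^2 := by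
      have h4 : rh^4 = 2*π*Ms*L^2*rh := by linarith
      have := mul_right_cancel₀ hrne (by linarith [h4] : rh^3 * rh = (2*π*Ms*L^2) * rh)
      linarith [this]
    have h4 : rh^4 = (4/3)*π*Qs^2*L^2 := by linarith
    -- from rh^12 computed two ways
    have key : π^3*L^6 * Qs^6 = π^3*L^6 * ((27/4)*π*Ms^4*L^2) := by
      have c1 : (rh^3)^4 = (2*π*Ms*L^2)^4 := by rw [h3]
      have c2 : (rh^4)^3 = ((4/3)*π*Qs^2*L^2)^3 := by rw [h4]
      linear_combination (27/64)*(c1 - c2)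
    exact mul_left_cancel₀ (by positivity) key
  · intro hext
    set rh : ℝ := (2*π*Ms*L^2) ^ ((1:ℝ)/3) with hrhdef
    have hbase : (0:ℝ) < 2*π*Ms*L^2 := by positivity
    have hrh : 0 < rh := Real.rpow_pos_of_pos hbase _
    have hrne : rh ≠ 0 := ne_of_gt hrh
    have hLne : L ≠ 0 := ne_of_gt hL
    have h3 : rh^3 = 2*π*Ms*L^2 := by
      rw [hrhdef, ← Real.rpow_natCast ((2*π*Ms*L^2) ^ ((1:ℝ)/3)) 3,
        ← Real.rpow_mul (le_of_lt hbase)]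
      norm_num
    have h4 : rh^4 = (4/3)*π*Qs^2*L^2 := by
      have c1 : (rh^4)^3 = ((4/3)*π*Qs^2*L^2)^3 := by
        have h := congrArg (· ^ 4) h3
        simp only [← pow_mul] at h
        linear_combination h - (64/27)*π^3*L^6 * hext
      have hx : (0:ℝ) ≤ rh^4 := by positivity
      have hy : (0:ℝ) ≤ (4/3)*π*Qs^2*L^2 := by positivity
      exact (pow_left_inj₀ hx hy (by norm_num : (3:ℕ) ≠ 0)).mp c1
    refine ⟨rh, hrh, ?_, ?_⟩
    · field_simp
      nlinarith [h3, h4]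
    · rw [(hasDerivAt_metric L Ms Qs rh hrne).deriv]
      field_simp
      nlinarith [h3, h4]
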